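/- Let M ≥ 2 and κ ≥ 0, and define V(δ) = ((M + 2κδ)M² − 2δM(1+κ) + δ²)/(M³(M−1)(1+κ)²) for δ ∈ ℝ. Then V is a convex function of δ, and setting δ* = M·(1 − min(κ(M−1), 1)), one has V(δ) ≥ V(δ*) for every δ ≥ 0; i.e., over the admissible range δ ≥ 0, the variance of the harvested energy under the Switching-Antennas scheme is minimized at δ = M(1 − min(κ(M−1), 1)). -/

import Mathlib

/-- For `M ≥ 2` and `κ ≥ 0`, the Switching-Antennas variance function
`V(δ) = ((M + 2κδ)M² − 2δM(1+κ) + δ²)/(M³(M−1)(1+κ)²)` is convex in `δ`, and over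
`δ ≥ 0` it is minimized at `δ* = M(1 − min(κ(M−1), 1))`. -/
theorem SA_variance_convex_min (M : ℕ) (hM : 2 ≤ M) (κ : ℝ) (hκ : 0 ≤ κ)
    (V : ℝ → ℝ)
    (hV : ∀ δ : ℝ, V δ = (((M : ℝ) + 2 * κ * δ) * (M : ℝ) ^ 2
      - 2 * δ * M * (1 + κ) + δ ^ 2) / ((M : ℝ) ^ 3 * ((M : ℝ) - 1) * (1 + κ) ^ 2)) :
    ConvexOn ℝ Set.univ V ∧
    ∀ δ : ℝ, 0 ≤ δ → V ((M : ℝ) * (1 - min (κ * ((M : ℝ) - 1)) 1)) ≤ V δ := by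
  have hM2 : (2 : ℝ) ≤ (M : ℝ) := by exact_mod_cast hM
  have hD : 0 < (M : ℝ) ^ 3 * ((M : ℝ) - 1) * (1 + κ) ^ 2 := by
    apply mul_pos (mul_pos (by positivity) (by linarith)) (by positivity)
  constructor
  · refine ⟨convex_univ, ?_⟩
    intro x _ y _ a b ha hb hab
    rw [hV, hV, hV]
    rw [smul_eq_mul, smul_eq_mul, smul_eq_mul, smul_eq_mul,
      mul_div_assoc', mul_div_assoc', ← add_div, div_le_div_iff_of_pos_right hD]
    have hb' : b = 1 - a := by linarith
    subst hb'
    nlinarith [mul_nonneg (mul_nonneg ha hb) (sq_nonneg (x - y))]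
  · intro δ hδ
    rw [hV, hV, div_le_div_iff₀ hD hD]
    rcases le_total (κ * ((M : ℝ) - 1)) 1 with h | h
    · rw [min_eq_left h]
      nlinarith [sq_nonneg (δ - (M : ℝ) * (1 - κ * ((M : ℝ) - 1))), hD, sq_nonneg δ]
    · rw [min_eq_right h]
      nlinarith [mul_nonneg hδ (mul_nonneg (by linarith : (0:ℝ) ≤ (M:ℝ)) (by linarith : (0:ℝ) ≤ κ * ((M:ℝ)-1) - 1)), hD, sq_nonneg δ]
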